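/- Let G be a group and H ≤ G a subgroup of finite index m. Let V be a finite-dimensional complex vector space and ρ : G → GL(V) an irreducible representation, i.e. V ≠ 0 and the only subspaces of V mapped into themselves by ρ(g) for all g ∈ G are 0 and V. Suppose there exists a one-dimensional subspace L ≤ V with ρ(h)(L) = L for all h ∈ H. Then dim_ℂ V ≤ m. -/

import Mathlib

lemma finrank_finset_sup_le {V : Type*} [AddCommGroup V] [Module ℂ V] [FiniteDimensional ℂ V]
    {ι : Type*} (s : Finset ι) (f : ι → Submodule ℂ V) :
    Module.finrank ℂ ((s.sup f : Submodule ℂ V) : Type _) ≤ ∑ i ∈ s, Module.finrank ℂ (f i) := by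
  classical
  induction s using Finset.induction with
  | empty => simp
  | insert a s hx ih =>
    rw [Finset.sup_insert, Finset.sum_insert hx]
    exact le_trans (Submodule.finrank_add_le_finrank_add_finrank _ _) (by omega)

/-- If an irreducible finite-dimensional complex representation
of a group `G` has a line stabilized by a subgroup `H` of finite index `m`,
then its dimension is at most `m`. -/
theorem stmt_9 (G : Type*) [Group G] (H : Subgroup G) (m : ℕ)
    (hm : H.index = m) (hm0 : 0 < m)
    (V : Type*) [AddCommGroup V] [Module ℂ V] [FiniteDimensional ℂ V]
    (ρ : Representation ℂ G V)
    (hnt : ∃ v : V, v ≠ 0)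
    (hirr : ∀ W : Submodule ℂ V, (∀ g : G, ∀ v ∈ W, ρ g v ∈ W) → W = ⊥ ∨ W = ⊤)
    (L : Submodule ℂ V) (hL : Module.finrank ℂ L = 1)
    (hLinv : ∀ h ∈ H, L.map (ρ h) = L) :
    Module.finrank ℂ V ≤ m := by
  classical
  -- the map g ↦ ρ g '' L descends to G ⧸ H
  have hdesc : ∀ g₁ g₂ : G, (QuotientGroup.mk g₁ : G ⧸ H) = QuotientGroup.mk g₂ →
      L.map (ρ g₁) = L.map (ρ g₂) := by
    intro g₁ g₂ h
    rw [QuotientGroup.eq] at h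
    have : L.map (ρ (g₁⁻¹ * g₂)) = L := hLinv _ h
    calc L.map (ρ g₁) = (L.map (ρ (g₁⁻¹ * g₂))).map (ρ g₁) := by rw [this]
      _ = L.map (ρ g₂) := by
          rw [← Submodule.map_comp, ← Module.End.mul_eq_comp, ← map_mul]
          congr 2
          group
  let f : G ⧸ H → Submodule ℂ V := Quotient.lift (fun g => L.map (ρ g)) (by
    intro a b hab
    exact hdesc a b (Quotient.sound hab))
  have hf : ∀ g : G, f (QuotientGroup.mk g) = L.map (ρ g) := fun g => rfl
  -- the sup W of all f q is G-invariant
  have hFI : H.FiniteIndex := ⟨by omega⟩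
  have hfin : Finite (G ⧸ H) := Subgroup.finite_quotient_of_finiteIndex
  have := Fintype.ofFinite (G ⧸ H)
  set W : Submodule ℂ V := ⨆ q : G ⧸ H, f q with hW
  have hWinv : ∀ g : G, ∀ v ∈ W, ρ g v ∈ W := by
    intro g v hv
    have hmap : W.map (ρ g) ≤ W := by
      rw [hW, Submodule.map_iSup]
      apply iSup_le
      intro q
      induction q using Quotient.inductionOn with
      | h a =>
        have : (f (QuotientGroup.mk a)).map (ρ g) = f (QuotientGroup.mk (g * a)) := by
          rw [hf, hf, ← Submodule.map_comp, ← Module.End.mul_eq_comp, ← map_mul]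
        rw [this]
        exact le_iSup f _
    exact hmap ⟨v, hv, rfl⟩
  have hWne : W ≠ ⊥ := by
    intro hbot
    have hle : f (QuotientGroup.mk 1) ≤ W := le_iSup f _
    rw [hbot, le_bot_iff] at hle
    have : L = ⊥ := by
      rwa [hf, map_one, Module.End.one_eq_id, Submodule.map_id] at hle
    rw [this] at hL
    simp at hL
  have hWtop : W = ⊤ := (hirr W hWinv).resolve_left hWne
  have hdim : Module.finrank ℂ V = Module.finrank ℂ W := by
    rw [hWtop, finrank_top ℂ V]
  rw [hdim]
  have : W = Finset.univ.sup f := by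
    rw [hW, ← Finset.sup_univ_eq_iSup]
  rw [this]
  calc Module.finrank ℂ ((Finset.univ.sup f : Submodule ℂ V) : Type _) ≤ ∑ q : G ⧸ H, Module.finrank ℂ (f q) :=
        finrank_finset_sup_le _ _
    _ = ∑ q : G ⧸ H, 1 := by
        apply Finset.sum_congr rfl
        intro q _
        induction q using Quotient.inductionOn with
        | h a =>
          have hinj : Function.Injective (ρ a) :=
            Function.LeftInverse.injective (g := ρ a⁻¹) (fun v => by
              rw [← Module.End.mul_apply, ← map_mul, inv_mul_cancel, map_one,
                Module.End.one_eq_id]; rfl)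
          rw [hf, show Module.finrank ℂ (L.map (ρ a)) = Module.finrank ℂ L from
            LinearEquiv.finrank_eq (Submodule.equivMapOfInjective _ hinj L).symm, hL]
    _ = m := by
        rw [Finset.sum_const, smul_eq_mul, mul_one, ← hm, Subgroup.index, Nat.card_eq_fintype_card,
          Finset.card_univ]
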